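/- Let T be a square-tiled interval exchange transformation with α irrational. Then T is aperiodic: there is no point z ∈ X and integer n ≥ 1 with T^n(z) = z. Moreover, T is minimal — every T-orbit {T^n z : n ∈ ℤ} is dense in X — if and only if (p_l,p_r) acts transitively, i.e. there is no nonempty proper subset of {1,…,d} invariant under both p_l and p_r. -/

import Mathlib

open Set

/-- The square-tiled interval exchange transformation `T = T_α` on
`X = [0,1) × {1,…,d}`, with `[0,1)` carrying the subspace topology of `ℝ` and `Fin d`
the discrete topology: `T(x,i) = ({x+α}, p_l i)` if `x ∈ [0,1−α)` and
`T(x,i) = ({x+α}, p_r i)` if `x ∈ [1−α,1)`. -/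
noncomputable def sqTsub (d : ℕ) (α : ℝ) (pl pr : Equiv.Perm (Fin d))
    (z : ↥(Set.Ico (0 : ℝ) 1) × Fin d) : ↥(Set.Ico (0 : ℝ) 1) × Fin d :=
  (⟨Int.fract ((z.1 : ℝ) + α), ⟨Int.fract_nonneg _, Int.fract_lt_one _⟩⟩,
    if (z.1 : ℝ) < 1 - α then pl z.2 else pr z.2)


lemma fract_step (a b : ℝ) : Int.fract (Int.fract a + b) = Int.fract (a + b) := by
  have h : Int.fract a + b = a + b - (⌊a⌋ : ℤ) := by
    rw [Int.fract]; ring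
  rw [h, Int.fract_sub_intCast]

lemma fract_pos_of_irrational {x : ℝ} (h : Irrational x) : 0 < Int.fract x := by
  rcases lt_or_eq_of_le (Int.fract_nonneg x) with h' | h'
  · exact h'
  · exfalso
    have : x = (⌊x⌋ : ℤ) := by
      have := Int.self_sub_fract x
      rw [← h'] at this; linarith
    exact h.ne_int _ this

lemma hitNat {β t δ : ℝ} (hβ : 0 < β) (hδ : β < δ) (ht : 0 ≤ t) :
    ∃ k : ℕ, t ≤ k * β ∧ (k : ℝ) * β < t + δ := by
  refine ⟨⌈t / β⌉₊, ?_, ?_⟩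
  · have h1 : t / β ≤ (⌈t / β⌉₊ : ℝ) := Nat.le_ceil _
    calc t = t / β * β := by field_simp
    _ ≤ (⌈t / β⌉₊ : ℝ) * β := by nlinarith
  · have h2 : (⌈t / β⌉₊ : ℝ) < t / β + 1 := Nat.ceil_lt_add_one (by positivity)
    have : (⌈t / β⌉₊ : ℝ) * β < (t / β + 1) * β := by nlinarith
    calc (⌈t / β⌉₊ : ℝ) * β < (t / β + 1) * β := this
    _ = t + β := by field_simp
    _ < t + δ := by linarith

lemma exists_small {α : ℝ} (h : Irrational α) {ε : ℝ} (hε : 0 < ε) (hε1 : ε < 1) :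
    ∃ m : ℕ, 0 < m ∧ 0 < Int.fract (m * α) ∧
      (Int.fract (m * α) < ε ∨ 1 - ε < Int.fract (m * α)) := by
  have hdense : Dense ((AddSubgroup.closure ({α, 1} : Set ℝ) : AddSubgroup ℝ) : Set ℝ) := by
    rcases AddSubgroup.dense_or_cyclic (AddSubgroup.closure ({α, 1} : Set ℝ)) with hd | ⟨a, ha⟩
    · exact hd
    · exfalso
      have hα : α ∈ AddSubgroup.closure ({α, 1} : Set ℝ) :=
        AddSubgroup.subset_closure (by simp)
      have h1 : (1 : ℝ) ∈ AddSubgroup.closure ({α, 1} : Set ℝ) :=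
        AddSubgroup.subset_closure (by simp)
      rw [ha, AddSubgroup.mem_closure_singleton] at hα h1
      obtain ⟨mm, hmm⟩ := hα
      obtain ⟨n, hn⟩ := h1
      have hn0 : (n : ℝ) ≠ 0 := by
        intro h'
        rw [zsmul_eq_mul, h'] at hn; simp at hn
      refine h ⟨(mm : ℚ) / (n : ℚ), ?_⟩
      rw [zsmul_eq_mul] at hmm hn
      push_cast
      rw [div_eq_iff hn0]
      calc (mm : ℝ) = mm * (n * a) := by rw [hn, mul_one]
      _ = (mm * a) * n := by ring
      _ = α * n := by rw [hmm]
  obtain ⟨g, hgmem, hg⟩ := hdense.exists_mem_open isOpen_Ioo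
    (⟨ε / 2, by constructor <;> [linarith; linarith]⟩ : (Ioo (0:ℝ) ε).Nonempty)
  obtain ⟨mi, k, hmk⟩ := AddSubgroup.mem_closure_pair.1 hgmem
  rw [zsmul_eq_mul, zsmul_eq_mul, mul_one] at hmk
  have hg0 : 0 < g := hg.1
  have hg1 : g < 1 := lt_trans hg.2 hε1
  have hfg : Int.fract g = g := Int.fract_eq_self.2 ⟨le_of_lt hg0, hg1⟩
  have hmi0 : mi ≠ 0 := by
    intro h'
    rw [h', Int.cast_zero, zero_mul, zero_add] at hmk
    rcases lt_trichotomy k 0 with hk | hk | hk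
    · have : (k : ℝ) ≤ -1 := by exact_mod_cast Int.le_sub_one_of_lt hk
      linarith [hmk ▸ hg0]
    · rw [hk] at hmk; simp at hmk; linarith [hmk ▸ hg0]
    · have : (1 : ℝ) ≤ (k : ℝ) := by exact_mod_cast hk
      linarith [hmk ▸ hg1]
  rcases lt_or_gt_of_ne hmi0 with hneg | hpos
  · have hcast : (((-mi).toNat : ℕ) : ℝ) = -(mi : ℝ) := by
      have : ((-mi).toNat : ℤ) = -mi := Int.toNat_of_nonneg (by omega)
      exact_mod_cast congrArg (Int.cast : ℤ → ℝ) this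
    have hval : (((-mi).toNat : ℕ) : ℝ) * α = -g + k := by
      rw [hcast]; nlinarith [hmk]
    have hfr : Int.fract (((-mi).toNat : ℕ) * α) = 1 - g := by
      rw [hval, Int.fract_add_intCast, Int.fract_neg (by rw [hfg]; linarith), hfg]
    refine ⟨(-mi).toNat, by omega, by rw [hfr]; linarith, Or.inr (by rw [hfr]; linarith [hg.2])⟩
  · have hcast : ((mi.toNat : ℕ) : ℝ) = (mi : ℝ) := by
      have : ((mi.toNat : ℤ)) = mi := Int.toNat_of_nonneg (by omega)
      exact_mod_cast congrArg (Int.cast : ℤ → ℝ) this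
    have hval : ((mi.toNat : ℕ) : ℝ) * α = g + -k := by
      rw [hcast]; nlinarith [hmk]
    have hfr : Int.fract ((mi.toNat : ℕ) * α) = g := by
      have : ((mi.toNat : ℕ) : ℝ) * α = g + ((-k : ℤ) : ℝ) := by rw [hval]; push_cast; ring
      rw [this, Int.fract_add_intCast, hfg]
    refine ⟨mi.toNat, by omega, by rw [hfr]; linarith, Or.inl (by rw [hfr]; exact hg.2)⟩

lemma dense_fract {α : ℝ} (h : Irrational α) (x y ε : ℝ) (hy0 : 0 ≤ y) (hy1 : y < 1)
    (hε : 0 < ε) : ∃ n : ℕ, y ≤ Int.fract (x + n * α) ∧ Int.fract (x + n * α) < y + ε := by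
  set ε0 : ℝ := min ε (1 - y) / 2 with hε0def
  have hε0 : 0 < ε0 := by
    have : 0 < min ε (1 - y) := lt_min hε (by linarith)
    positivity
  have hε0ε : 2 * ε0 ≤ ε := by
    have := min_le_left ε (1 - y); rw [hε0def]; linarith
  have hε0y : 2 * ε0 ≤ 1 - y := by
    have := min_le_right ε (1 - y); rw [hε0def]; linarith
  have hε0half : ε0 ≤ 1 / 2 := by linarith
  obtain ⟨m, hm, hfp, hcase⟩ := exists_small h hε0 (by linarith)
  set β : ℝ := Int.fract (m * α) with hβdef
  have hβ1 : β < 1 := Int.fract_lt_one _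
  set x0 : ℝ := Int.fract x with hx0def
  have hx00 : 0 ≤ x0 := Int.fract_nonneg x
  have hx01 : x0 < 1 := Int.fract_lt_one x
  have hcong : ∀ k : ℕ, Int.fract (x + (k * m : ℕ) * α) = Int.fract (x0 + k * β) := by
    intro k
    apply Int.fract_eq_fract.2
    refine ⟨⌊x⌋ + k * ⌊(m : ℝ) * α⌋, ?_⟩
    have h1 : x - x0 = (⌊x⌋ : ℝ) := by rw [hx0def]; exact Int.self_sub_fract x
    have h2 : (m : ℝ) * α - β = (⌊(m : ℝ) * α⌋ : ℝ) := by
      rw [hβdef]; exact Int.self_sub_fract _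
    push_cast
    nlinarith [h1, h2]
  rcases hcase with hsmall | hbig
  · -- β < ε0
    obtain ⟨k, hk1, hk2⟩ := hitNat hfp (show β < 2 * ε0 by linarith) (show (0:ℝ) ≤ y + 1 - x0 by linarith)
    refine ⟨k * m, ?_, ?_⟩
    · rw [hcong k]
      have hs : x0 + k * β ∈ Set.Ico (1 : ℝ) 2 := ⟨by linarith, by linarith⟩
      have : Int.fract (x0 + k * β) = x0 + k * β - 1 := by
        have h1 : Int.fract (x0 + k * β) = Int.fract (x0 + k * β - (1 : ℤ)) := (Int.fract_sub_intCast _ _).symm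
        rw [h1]
        push_cast
        exact Int.fract_eq_self.2 ⟨by linarith [hs.1], by linarith [hs.2]⟩
      rw [this]; linarith
    · rw [hcong k]
      have hs : x0 + k * β ∈ Set.Ico (1 : ℝ) 2 := ⟨by linarith, by linarith⟩
      have : Int.fract (x0 + k * β) = x0 + k * β - 1 := by
        have h1 : Int.fract (x0 + k * β) = Int.fract (x0 + k * β - (1 : ℤ)) := (Int.fract_sub_intCast _ _).symm
        rw [h1]
        push_cast
        exact Int.fract_eq_self.2 ⟨by linarith [hs.1], by linarith [hs.2]⟩
      rw [this]; linarith
  · -- 1 - ε0 < β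
    set γ : ℝ := 1 - β with hγdef
    have hγ0 : 0 < γ := by rw [hγdef]; linarith
    have hγε : γ < ε0 := by rw [hγdef]; linarith
    obtain ⟨k, hk1, hk2⟩ := hitNat hγ0 hγε (show (0:ℝ) ≤ x0 - y - ε0 + 2 by linarith)
    have hval : Int.fract (x0 + k * β) = x0 - k * γ + 2 := by
      have e1 : x0 + k * β = (x0 - k * γ + 2) + (((k : ℤ) - 2 : ℤ) : ℝ) := by
        rw [hγdef]; push_cast; ring
      rw [e1, Int.fract_add_intCast]
      exact Int.fract_eq_self.2 ⟨by linarith, by linarith⟩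
    exact ⟨k * m, by rw [hcong k, hval]; linarith, by rw [hcong k, hval]; linarith⟩

lemma fract_eq_of_Ico {u c : ℝ} (m : ℤ) (h : u - m = c) (hc : c ∈ Set.Ico (0:ℝ) 1) :
    Int.fract u = c := by
  have h2 : Int.fract (u - m) = Int.fract u := Int.fract_sub_intCast u m
  rw [h, Int.fract_eq_self.2 hc] at h2
  exact h2.symm

abbrev sqX (d : ℕ) := ↥(Set.Ico (0 : ℝ) 1) × Fin d

section SqT

variable {d : ℕ} {α : ℝ} {pl pr : Equiv.Perm (Fin d)}

noncomputable def sqTinv (d : ℕ) (α : ℝ) (pl pr : Equiv.Perm (Fin d)) (z : sqX d) : sqX d :=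
  (⟨Int.fract ((z.1 : ℝ) - α), ⟨Int.fract_nonneg _, Int.fract_lt_one _⟩⟩,
    if (z.1 : ℝ) < α then pr⁻¹ z.2 else pl⁻¹ z.2)

lemma sqT_fst (w : sqX d) : ((sqTsub d α pl pr w).1 : ℝ) = Int.fract ((w.1 : ℝ) + α) := rfl

lemma sqT_snd (w : sqX d) :
    (sqTsub d α pl pr w).2 = if (w.1 : ℝ) < 1 - α then pl w.2 else pr w.2 := rfl

lemma sqTinv_sqT (h0 : 0 < α) (h1 : α < 1) (w : sqX d) :
    sqTinv d α pl pr (sqTsub d α pl pr w) = w := by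
  obtain ⟨⟨x, hx0, hx1⟩, i⟩ := w
  by_cases h : x < 1 - α
  · have hfr : Int.fract (x + α) = x + α := Int.fract_eq_self.2 ⟨by linarith, by linarith⟩
    simp only [sqTsub, sqTinv, Prod.mk.injEq, Subtype.mk.injEq, hfr]
    refine ⟨Subtype.ext (fract_eq_of_Ico 0 (by push_cast; ring) ⟨hx0, hx1⟩), ?_⟩
    rw [if_pos h, if_neg (not_lt.2 (by linarith : α ≤ x + α))]
    simp
  · push_neg at h
    have hfr : Int.fract (x + α) = x + α - 1 :=
      fract_eq_of_Ico 1 (by push_cast; ring) ⟨by linarith, by linarith⟩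
    simp only [sqTsub, sqTinv, Prod.mk.injEq, Subtype.mk.injEq, hfr]
    refine ⟨Subtype.ext (fract_eq_of_Ico (-1) (by push_cast; ring) ⟨hx0, hx1⟩), ?_⟩
    rw [if_neg (not_lt.2 h), if_pos (by linarith : x + α - 1 < α)]
    simp

lemma sqT_sqTinv (h0 : 0 < α) (h1 : α < 1) (w : sqX d) :
    sqTsub d α pl pr (sqTinv d α pl pr w) = w := by
  obtain ⟨⟨x, hx0, hx1⟩, i⟩ := w
  by_cases h : x < α
  · have hfr : Int.fract (x - α) = x - α + 1 :=
      fract_eq_of_Ico (-1) (by push_cast; ring) ⟨by linarith, by linarith⟩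
    simp only [sqTsub, sqTinv, Prod.mk.injEq, Subtype.mk.injEq, hfr]
    refine ⟨Subtype.ext (fract_eq_of_Ico 1 (by push_cast; ring) ⟨hx0, hx1⟩), ?_⟩
    rw [if_pos h, if_neg (not_lt.2 (by linarith : 1 - α ≤ x - α + 1))]
    simp
  · push_neg at h
    have hfr : Int.fract (x - α) = x - α := Int.fract_eq_self.2 ⟨by linarith, by linarith⟩
    simp only [sqTsub, sqTinv, Prod.mk.injEq, Subtype.mk.injEq, hfr]
    refine ⟨Subtype.ext (fract_eq_of_Ico 0 (by push_cast; ring) ⟨hx0, hx1⟩), ?_⟩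
    rw [if_neg (not_lt.2 h), if_pos (by linarith : x - α < 1 - α)]
    simp

def sqOrb (d : ℕ) (α : ℝ) (pl pr : Equiv.Perm (Fin d)) (z : sqX d) : Set (sqX d) :=
  {w | ∃ n : ℕ, (sqTsub d α pl pr)^[n] z = w ∨ (sqTsub d α pl pr)^[n] w = z}

lemma orb_self (z : sqX d) : z ∈ sqOrb d α pl pr z := ⟨0, Or.inl rfl⟩

lemma orb_T {z w : sqX d} (hw : w ∈ sqOrb d α pl pr z) :
    sqTsub d α pl pr w ∈ sqOrb d α pl pr z := by
  obtain ⟨n, h | h⟩ := hw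
  · exact ⟨n + 1, Or.inl (by rw [Function.iterate_succ_apply', h])⟩
  · cases n with
    | zero =>
      simp only [Function.iterate_zero_apply] at h
      exact ⟨1, Or.inl (by simp [h])⟩
    | succ k =>
      exact ⟨k, Or.inr (by rw [← Function.iterate_succ_apply]; exact h)⟩

lemma orb_Tinv (h0 : 0 < α) (h1 : α < 1) {z w : sqX d} (hw : w ∈ sqOrb d α pl pr z) :
    sqTinv d α pl pr w ∈ sqOrb d α pl pr z := by
  obtain ⟨n, h | h⟩ := hw
  · cases n with
    | zero =>
      simp only [Function.iterate_zero_apply] at h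
      subst h
      exact ⟨1, Or.inr (by simpa using sqT_sqTinv h0 h1 z)⟩
    | succ k =>
      refine ⟨k, Or.inl ?_⟩
      rw [Function.iterate_succ_apply'] at h
      rw [← h, sqTinv_sqT h0 h1]
  · refine ⟨n + 1, Or.inr ?_⟩
    rw [Function.iterate_succ_apply, sqT_sqTinv h0 h1]
    exact h

end SqT

section SqS

variable {d : ℕ} {α : ℝ} {pl pr : Equiv.Perm (Fin d)}

def sqS (d : ℕ) (α : ℝ) (pl pr : Equiv.Perm (Fin d)) (z : sqX d) (y : ℝ) : Set (Fin d) :=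
  {j | ∀ ε : ℝ, 0 < ε → ∃ w ∈ sqOrb d α pl pr z, w.2 = j ∧ y ≤ (w.1 : ℝ) ∧ (w.1 : ℝ) < y + ε}

lemma sqTinv_fst (w : sqX d) :
    ((sqTinv d α pl pr w).1 : ℝ) = Int.fract ((w.1 : ℝ) - α) := rfl

lemma sqTinv_snd (w : sqX d) :
    (sqTinv d α pl pr w).2 = if (w.1 : ℝ) < α then pr⁻¹ w.2 else pl⁻¹ w.2 := rfl

lemma sqS_mapL (h0 : 0 < α) {z : sqX d} {y : ℝ} (hy0 : 0 ≤ y) (hy1 : y < 1 - α) {j : Fin d}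
    (hj : j ∈ sqS d α pl pr z y) : pl j ∈ sqS d α pl pr z (y + α) := by
  intro ε hε
  obtain ⟨w, hworb, hw2, hw3, hw4⟩ := hj (min ε (1 - α - y)) (lt_min hε (by linarith))
  have hwx : (w.1 : ℝ) ∈ Set.Ico (0:ℝ) 1 := w.1.2
  have hlt : (w.1 : ℝ) < 1 - α := by
    have := min_le_right ε (1 - α - y); linarith
  have hfr : Int.fract ((w.1 : ℝ) + α) = (w.1 : ℝ) + α :=
    Int.fract_eq_self.2 ⟨by linarith [hwx.1], by linarith⟩
  refine ⟨sqTsub d α pl pr w, orb_T hworb, ?_, ?_, ?_⟩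
  · rw [sqT_snd, if_pos hlt, hw2]
  · show y + α ≤ ((sqTsub d α pl pr w).1 : ℝ)
    rw [sqT_fst, hfr]; linarith
  · show ((sqTsub d α pl pr w).1 : ℝ) < y + α + ε
    rw [sqT_fst, hfr]
    have := min_le_left ε (1 - α - y); linarith

lemma sqS_mapR (h1 : α < 1) {z : sqX d} {y : ℝ} (hy0 : 1 - α ≤ y) (hy1 : y < 1) {j : Fin d}
    (hj : j ∈ sqS d α pl pr z y) : pr j ∈ sqS d α pl pr z (y + α - 1) := by
  intro ε hε
  obtain ⟨w, hworb, hw2, hw3, hw4⟩ := hj (min ε (1 - y)) (lt_min hε (by linarith))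
  have hwx : (w.1 : ℝ) ∈ Set.Ico (0:ℝ) 1 := w.1.2
  have hge : ¬ ((w.1 : ℝ) < 1 - α) := not_lt.2 (by linarith)
  have hfr : Int.fract ((w.1 : ℝ) + α) = (w.1 : ℝ) + α - 1 :=
    fract_eq_of_Ico 1 (by push_cast; ring) ⟨by linarith, by linarith [hwx.2]⟩
  refine ⟨sqTsub d α pl pr w, orb_T hworb, ?_, ?_, ?_⟩
  · rw [sqT_snd, if_neg hge, hw2]
  · show y + α - 1 ≤ ((sqTsub d α pl pr w).1 : ℝ)
    rw [sqT_fst, hfr]; linarith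
  · show ((sqTsub d α pl pr w).1 : ℝ) < y + α - 1 + ε
    rw [sqT_fst, hfr]
    have := min_le_left ε (1 - y); linarith

lemma sqS_mapLinv (h0 : 0 < α) (h1 : α < 1) {z : sqX d} {y : ℝ} (hy0 : α ≤ y) (hy1 : y < 1)
    {j : Fin d} (hj : j ∈ sqS d α pl pr z y) : pl⁻¹ j ∈ sqS d α pl pr z (y - α) := by
  intro ε hε
  obtain ⟨w, hworb, hw2, hw3, hw4⟩ := hj (min ε (1 - y)) (lt_min hε (by linarith))
  have hwx : (w.1 : ℝ) ∈ Set.Ico (0:ℝ) 1 := w.1.2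
  have hge : ¬ ((w.1 : ℝ) < α) := not_lt.2 (by linarith)
  have hfr : Int.fract ((w.1 : ℝ) - α) = (w.1 : ℝ) - α :=
    Int.fract_eq_self.2 ⟨by linarith, by linarith [hwx.2]⟩
  refine ⟨sqTinv d α pl pr w, orb_Tinv h0 h1 hworb, ?_, ?_, ?_⟩
  · rw [sqTinv_snd, if_neg hge, hw2]
  · show y - α ≤ ((sqTinv d α pl pr w).1 : ℝ)
    rw [sqTinv_fst, hfr]; linarith
  · show ((sqTinv d α pl pr w).1 : ℝ) < y - α + ε
    rw [sqTinv_fst, hfr]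
    have := min_le_left ε (1 - y); linarith

lemma sqS_mapRinv (h0 : 0 < α) (h1 : α < 1) {z : sqX d} {y : ℝ} (hy0 : 0 ≤ y) (hy1 : y < α)
    {j : Fin d} (hj : j ∈ sqS d α pl pr z y) : pr⁻¹ j ∈ sqS d α pl pr z (y + 1 - α) := by
  intro ε hε
  obtain ⟨w, hworb, hw2, hw3, hw4⟩ := hj (min ε (α - y)) (lt_min hε (by linarith))
  have hwx : (w.1 : ℝ) ∈ Set.Ico (0:ℝ) 1 := w.1.2
  have hlt : (w.1 : ℝ) < α := by
    have := min_le_right ε (α - y); linarith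
  have hfr : Int.fract ((w.1 : ℝ) - α) = (w.1 : ℝ) - α + 1 :=
    fract_eq_of_Ico (-1) (by push_cast; ring) ⟨by linarith, by linarith⟩
  refine ⟨sqTinv d α pl pr w, orb_Tinv h0 h1 hworb, ?_, ?_, ?_⟩
  · rw [sqTinv_snd, if_pos hlt, hw2]
  · show y + 1 - α ≤ ((sqTinv d α pl pr w).1 : ℝ)
    rw [sqTinv_fst, hfr]; linarith
  · show ((sqTinv d α pl pr w).1 : ℝ) < y + 1 - α + ε
    rw [sqTinv_fst, hfr]
    have := min_le_left ε (α - y); linarith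

lemma sqS_eqL (h0 : 0 < α) (h1 : α < 1) (z : sqX d) {y : ℝ} (hy0 : 0 ≤ y) (hy1 : y < 1 - α) :
    sqS d α pl pr z (y + α) = pl '' sqS d α pl pr z y := by
  apply Set.Subset.antisymm
  · intro j hj
    have h' : pl⁻¹ j ∈ sqS d α pl pr z (y + α - α) :=
      sqS_mapLinv h0 h1 (by linarith) (by linarith) hj
    rw [show y + α - α = y by ring] at h'
    exact ⟨pl⁻¹ j, h', by simp⟩
  · rintro _ ⟨j, hj, rfl⟩
    exact sqS_mapL h0 hy0 hy1 hj

lemma sqS_eqR (h0 : 0 < α) (h1 : α < 1) (z : sqX d) {y : ℝ} (hy0 : 1 - α ≤ y) (hy1 : y < 1) :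
    sqS d α pl pr z (y + α - 1) = pr '' sqS d α pl pr z y := by
  apply Set.Subset.antisymm
  · intro j hj
    have h' : pr⁻¹ j ∈ sqS d α pl pr z (y + α - 1 + 1 - α) :=
      sqS_mapRinv h0 h1 (by linarith) (by linarith) hj
    rw [show y + α - 1 + 1 - α = y by ring] at h'
    exact ⟨pr⁻¹ j, h', by simp⟩
  · rintro _ ⟨j, hj, rfl⟩
    exact sqS_mapR h1 hy0 hy1 hj

lemma iter_fst (z : sqX d) : ∀ n : ℕ,
    (((sqTsub d α pl pr)^[n] z).1 : ℝ) = Int.fract ((z.1 : ℝ) + n * α)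
  | 0 => by simp [Int.fract_eq_self.2 z.1.2]
  | (n+1) => by
      rw [Function.iterate_succ_apply', sqT_fst, iter_fst z n, fract_step]
      congr 1
      push_cast; ring

lemma sqS_nonempty (hd : 1 ≤ d) (hirr : Irrational α) (z : sqX d) {y : ℝ}
    (hy0 : 0 ≤ y) (hy1 : y < 1) : (sqS d α pl pr z y).Nonempty := by
  by_contra hne
  rw [Set.not_nonempty_iff_eq_empty] at hne
  have key : ∀ j : Fin d, ∃ ε, 0 < ε ∧
      ¬∃ w ∈ sqOrb d α pl pr z, w.2 = j ∧ y ≤ (w.1 : ℝ) ∧ (w.1 : ℝ) < y + ε := by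
    intro j
    by_contra hc
    push_neg at hc
    have : j ∈ sqS d α pl pr z y := fun ε hε => hc ε hε
    rw [hne] at this
    exact this
  choose εf hεf using key
  obtain ⟨j₀, _, hj₀⟩ := Finset.exists_min_image Finset.univ εf ⟨⟨0, hd⟩, Finset.mem_univ _⟩
  obtain ⟨n, hn1, hn2⟩ := dense_fract hirr (z.1 : ℝ) y (εf j₀) hy0 hy1 (hεf j₀).1
  set w : sqX d := (sqTsub d α pl pr)^[n] z with hw
  refine (hεf w.2).2 ⟨w, ⟨n, Or.inl rfl⟩, rfl, ?_, ?_⟩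
  · rw [hw, iter_fst]; exact hn1
  · rw [hw, iter_fst]
    have := hj₀ w.2 (Finset.mem_univ _)
    linarith

lemma rot_step (h0 : 0 < α) (h1 : α < 1) (z : sqX d) {u : ℝ} (hu0 : 0 ≤ u) (hu1 : u < 1) :
    ∃ τ : Equiv.Perm (Fin d),
      sqS d α pl pr z (Int.fract (u + α)) = τ '' sqS d α pl pr z u := by
  rcases lt_or_ge u (1 - α) with h | h
  · refine ⟨pl, ?_⟩
    rw [Int.fract_eq_self.2 ⟨by linarith, by linarith⟩]
    exact sqS_eqL h0 h1 z hu0 h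
  · refine ⟨pr, ?_⟩
    rw [show Int.fract (u + α) = u + α - 1 from
      fract_eq_of_Ico 1 (by push_cast; ring) ⟨by linarith, by linarith⟩]
    exact sqS_eqR h0 h1 z h hu1

lemma sqS_transport (h0 : 0 < α) (h1 : α < 1) (z : sqX d) {y0 : ℝ}
    (h00 : 0 ≤ y0) (h01 : y0 < 1) : ∀ n : ℕ, ∃ σ : Equiv.Perm (Fin d),
      sqS d α pl pr z (Int.fract (y0 + n * α)) = σ '' sqS d α pl pr z y0
  | 0 => ⟨1, by simp [Int.fract_eq_self.2 ⟨h00, h01⟩]⟩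
  | (n+1) => by
      obtain ⟨σ, hσ⟩ := sqS_transport h0 h1 z h00 h01 n
      obtain ⟨τ, hτ⟩ := rot_step h0 h1 z
        (Int.fract_nonneg (y0 + n * α)) (Int.fract_lt_one (y0 + n * α))
      refine ⟨τ * σ, ?_⟩
      have hiter : Int.fract (y0 + ((n : ℕ) + 1 : ℕ) * α)
          = Int.fract (Int.fract (y0 + n * α) + α) := by
        rw [fract_step]
        congr 1
        push_cast; ring
      rw [hiter, hτ, hσ, ← Set.image_comp, ← Equiv.Perm.coe_mul]

lemma exists_const_subseq {β : Type*} [Finite β] (f : ℕ → β) :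
    ∃ b : β, ∀ N : ℕ, ∃ m, N ≤ m ∧ f m = b := by
  obtain ⟨b, hb⟩ := Finite.exists_infinite_fiber f
  have hs : (f ⁻¹' {b}).Infinite := Set.infinite_coe_iff.1 hb
  refine ⟨b, fun N => ?_⟩
  by_contra hc
  push_neg at hc
  refine (Set.Finite.subset (Set.finite_Iio N) ?_).not_infinite hs
  intro m hm
  by_contra hmN
  exact hc m (not_lt.1 fun h => hmN h) hm

lemma sqS_rsc {z : sqX d} {y : ℝ} {j : Fin d}
    (h : ∀ δ : ℝ, 0 < δ → ∃ y', y ≤ y' ∧ y' < y + δ ∧ j ∈ sqS d α pl pr z y') :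
    j ∈ sqS d α pl pr z y := by
  intro ε hε
  obtain ⟨y', hy1, hy2, hj⟩ := h (ε/2) (by linarith)
  obtain ⟨w, hw, h2, h3, h4⟩ := hj (ε/2) (by linarith)
  exact ⟨w, hw, h2, le_trans hy1 h3, by linarith⟩

lemma sqS_limsup (z : sqX d) (y : ℝ) (u : ℕ → ℝ)
    (hu : ∀ m : ℕ, y ≤ u m ∧ u m < y + 1/(m+1)) :
    ∃ S0 : Set (Fin d), S0 ⊆ sqS d α pl pr z y ∧
      ∀ N : ℕ, ∃ m, N ≤ m ∧ sqS d α pl pr z (u m) = S0 := by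
  obtain ⟨S0, hS0⟩ := exists_const_subseq (fun m => sqS d α pl pr z (u m))
  refine ⟨S0, ?_, hS0⟩
  intro j hj
  apply sqS_rsc
  intro δ hδ
  obtain ⟨m, hm, hfm⟩ := hS0 ⌈1/δ⌉₊
  refine ⟨u m, (hu m).1, ?_, by rw [hfm]; exact hj⟩
  have h1 : (1:ℝ)/δ ≤ (⌈1/δ⌉₊ : ℝ) := Nat.le_ceil _
  have hmc : ((⌈1/δ⌉₊ : ℕ) : ℝ) ≤ (m : ℝ) := by exact_mod_cast hm
  have h2 : (1:ℝ)/(m+1) < δ := by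
    rw [div_lt_iff₀ (by positivity)]
    have h3 : 1/δ < (m:ℝ) + 1 := by linarith
    calc (1:ℝ) = δ * (1/δ) := by field_simp
    _ < δ * ((m:ℝ)+1) := by exact mul_lt_mul_of_pos_left h3 hδ
    _ = δ * ((m:ℝ)+1) := rfl
  linarith [(hu m).2]

lemma sqS_ncard_le (hirr : Irrational α) (h0 : 0 < α) (h1 : α < 1) (z : sqX d) {y y' : ℝ}
    (hy0 : 0 ≤ y) (hy1 : y < 1) (hy0' : 0 ≤ y') (hy1' : y' < 1) :
    (sqS d α pl pr z y').ncard ≤ (sqS d α pl pr z y).ncard := by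
  have hch : ∀ m : ℕ, ∃ n : ℕ, y ≤ Int.fract (y' + n * α) ∧
      Int.fract (y' + n * α) < y + 1/(m+1) :=
    fun m => dense_fract hirr y' y (1/(m+1)) hy0 hy1 (by positivity)
  choose nf hnf using hch
  obtain ⟨S0, hsub, hval⟩ := sqS_limsup z y (fun m => Int.fract (y' + nf m * α)) hnf
  obtain ⟨m, _, hm⟩ := hval 0
  obtain ⟨σ, hσ⟩ := sqS_transport h0 h1 z hy0' hy1' (nf m)
  have hcard : S0.ncard = (sqS d α pl pr z y').ncard := by
    rw [← hm, hσ, Set.ncard_image_of_injective _ σ.injective]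
  rw [← hcard]
  exact Set.ncard_le_ncard hsub (Set.toFinite _)

lemma sqS_rlc (hirr : Irrational α) (h0 : 0 < α) (h1 : α < 1) (z : sqX d) {y : ℝ}
    (hy0 : 0 ≤ y) (hy1 : y < 1) :
    ∃ δ, 0 < δ ∧ ∀ y', y ≤ y' → y' < y + δ → y' < 1 →
      sqS d α pl pr z y' = sqS d α pl pr z y := by
  by_contra hc
  push_neg at hc
  have hch : ∀ m : ℕ, ∃ y', y ≤ y' ∧ y' < y + 1/(m+1) ∧ y' < 1 ∧
      sqS d α pl pr z y' ≠ sqS d α pl pr z y :=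
    fun m => hc (1/(m+1)) (by positivity)
  choose u hu1 hu2 hu3 hu4 using hch
  obtain ⟨S0, hsub, hval⟩ := sqS_limsup z y u (fun m => ⟨hu1 m, hu2 m⟩)
  obtain ⟨m, _, hm⟩ := hval 0
  have hcard : (sqS d α pl pr z y).ncard ≤ S0.ncard := by
    rw [← hm]
    exact sqS_ncard_le hirr h0 h1 z (le_trans hy0 (hu1 m)) (hu3 m) hy0 hy1
  have : S0 = sqS d α pl pr z y := Set.eq_of_subset_of_ncard_le hsub hcard (Set.toFinite _)
  exact hu4 m (hm.trans this)

end SqS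

section SqJ

variable {d : ℕ} {α : ℝ} {pl pr : Equiv.Perm (Fin d)}

lemma irr_solve {α : ℝ} (hirr : Irrational α) {q : ℕ} (hq : q ≠ 0) (m : ℤ)
    (h : (q : ℝ) * α = m) : False := by
  refine hirr ⟨(m : ℚ) / (q : ℚ), ?_⟩
  have hq' : ((q : ℝ)) ≠ 0 := Nat.cast_ne_zero.2 hq
  push_cast
  rw [div_eq_iff hq']
  linarith [h]

def sqJ (d : ℕ) (α : ℝ) (pl pr : Equiv.Perm (Fin d)) (z : sqX d) : Set ℝ :=
  {y | 0 < y ∧ y < 1 ∧ ∀ δ : ℝ, 0 < δ →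
    ∃ w, y - δ < w ∧ w < y ∧ sqS d α pl pr z w ≠ sqS d α pl pr z y}

lemma sqS_conj (h0 : 0 < α) (h1 : α < 1) (z : sqX d) {y : ℝ}
    (hy0 : 0 < y) (hy1 : y < 1) (hne : y ≠ 1 - α) :
    ∃ δ0, 0 < δ0 ∧ ∃ σ : Equiv.Perm (Fin d), ∀ t : ℝ, |t| < δ0 →
      sqS d α pl pr z (Int.fract (y + α) + t) = σ '' sqS d α pl pr z (y + t) := by
  rcases lt_or_gt_of_ne hne with h | h
  · refine ⟨min y (1 - α - y), lt_min hy0 (by linarith), pl, fun t ht => ?_⟩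
    rw [abs_lt] at ht
    have hm1 := min_le_left y (1 - α - y)
    have hm2 := min_le_right y (1 - α - y)
    have h1t : 0 ≤ y + t := by linarith [ht.1]
    have h2t : y + t < 1 - α := by linarith [ht.2]
    have hfr : Int.fract (y + α) = y + α := Int.fract_eq_self.2 ⟨by linarith, by linarith⟩
    rw [hfr, show y + α + t = (y + t) + α by ring]
    exact sqS_eqL h0 h1 z h1t h2t
  · refine ⟨min (y - (1 - α)) (1 - y), lt_min (by linarith) (by linarith), pr, fun t ht => ?_⟩
    rw [abs_lt] at ht
    have hm1 := min_le_left (y - (1 - α)) (1 - y)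
    have hm2 := min_le_right (y - (1 - α)) (1 - y)
    have h1t : 1 - α ≤ y + t := by linarith [ht.1]
    have h2t : y + t < 1 := by linarith [ht.2]
    have hfr : Int.fract (y + α) = y + α - 1 :=
      fract_eq_of_Ico 1 (by push_cast; ring) ⟨by linarith, by linarith⟩
    rw [hfr, show y + α - 1 + t = (y + t) + α - 1 by ring]
    exact sqS_eqR h0 h1 z h1t h2t

lemma rot_mem (h0 : 0 < α) (h1 : α < 1) {y : ℝ} (hy0 : 0 < y) (hy1 : y < 1)
    (hne : y ≠ 1 - α) : 0 < Int.fract (y + α) := by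
  rcases lt_or_eq_of_le (Int.fract_nonneg (y + α)) with h' | h'
  · exact h'
  · exfalso
    have h3 : y + α = (⌊y + α⌋ : ℝ) := by
      have := Int.self_sub_fract (y + α); rw [← h'] at this; linarith
    have h4 : (0 : ℤ) < ⌊y + α⌋ := by
      have : (0:ℝ) < (⌊y + α⌋ : ℝ) := by rw [← h3]; linarith
      exact_mod_cast this
    have h5 : ⌊y + α⌋ < 2 := by
      have : (⌊y + α⌋ : ℝ) < 2 := by rw [← h3]; linarith
      exact_mod_cast this
    have h6 : ⌊y + α⌋ = 1 := by omega
    rw [h6] at h3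
    apply hne
    push_cast at h3
    linarith

lemma sqJ_rot (h0 : 0 < α) (h1 : α < 1) (z : sqX d) {y : ℝ}
    (hy0 : 0 < y) (hy1 : y < 1) (hne : y ≠ 1 - α) :
    y ∈ sqJ d α pl pr z ↔ Int.fract (y + α) ∈ sqJ d α pl pr z := by
  obtain ⟨δ0, hδ0, σ, hconj⟩ := sqS_conj h0 h1 z hy0 hy1 hne
  have hr0 : 0 < Int.fract (y + α) := rot_mem h0 h1 hy0 hy1 hne
  have hr1 : Int.fract (y + α) < 1 := Int.fract_lt_one _
  have hS : sqS d α pl pr z (Int.fract (y + α)) = σ '' sqS d α pl pr z y := by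
    have := hconj 0 (by rwa [abs_zero])
    simpa using this
  constructor
  · rintro ⟨-, -, hJ⟩
    refine ⟨hr0, hr1, fun δ hδ => ?_⟩
    obtain ⟨w, hw1, hw2, hw3⟩ := hJ (min δ δ0) (lt_min hδ hδ0)
    have hm1 := min_le_left δ δ0
    have hm2 := min_le_right δ δ0
    refine ⟨Int.fract (y + α) + (w - y), by linarith, by linarith, ?_⟩
    have habs : |w - y| < δ0 := by rw [abs_lt]; exact ⟨by linarith, by linarith⟩
    rw [hconj (w - y) habs, show y + (w - y) = w by ring, hS]
    intro he
    exact hw3 (Set.image_injective.2 σ.injective he)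
  · rintro ⟨-, -, hJ⟩
    refine ⟨hy0, hy1, fun δ hδ => ?_⟩
    obtain ⟨w, hw1, hw2, hw3⟩ := hJ (min δ δ0) (lt_min hδ hδ0)
    have hm1 := min_le_left δ δ0
    have hm2 := min_le_right δ δ0
    have habs : |w - Int.fract (y + α)| < δ0 := by rw [abs_lt]; exact ⟨by linarith, by linarith⟩
    refine ⟨y + (w - Int.fract (y + α)), by linarith, by linarith, ?_⟩
    intro he
    apply hw3
    have e1 : sqS d α pl pr z w = σ '' sqS d α pl pr z (y + (w - Int.fract (y + α))) := by
      rw [← hconj _ habs]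
      congr 1
      ring
    rw [e1, hS, he]

lemma sqJ_gap (hirr : Irrational α) (h0 : 0 < α) (h1 : α < 1) (z : sqX d) {y : ℝ}
    (hy0 : 0 ≤ y) (hy1 : y < 1) :
    ∃ δ, 0 < δ ∧ ∀ w, y < w → w < y + δ → w ∉ sqJ d α pl pr z := by
  obtain ⟨δ, hδ, hconst⟩ := sqS_rlc hirr h0 h1 z hy0 hy1
  refine ⟨min δ (1 - y), lt_min hδ (by linarith), fun w hw1 hw2 hJ => ?_⟩
  have hm1 := min_le_left δ (1 - y)
  have hm2 := min_le_right δ (1 - y)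
  obtain ⟨hw0, hwlt1, hJ'⟩ := hJ
  obtain ⟨v, hv1, hv2, hv3⟩ := hJ' (w - y) (by linarith)
  apply hv3
  rw [hconst v (by linarith) (by linarith) (by linarith),
    hconst w (le_of_lt hw1) (by linarith) (by linarith)]

lemma sqJ_empty (hirr : Irrational α) (h0 : 0 < α) (h1 : α < 1) (z : sqX d) :
    sqJ d α pl pr z = ∅ := by
  by_contra hne
  obtain ⟨ystar, hyJ⟩ := Set.nonempty_iff_ne_empty.2 hne
  have hy0 : 0 < ystar := hyJ.1
  have hy1 : ystar < 1 := hyJ.2.1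
  obtain ⟨δ, hδ, hgap⟩ := sqJ_gap hirr h0 h1 z (le_refl (0:ℝ)) one_pos
  set c := min δ 1 with hc
  have hc0 : 0 < c := lt_min hδ one_pos
  have hcδ : c ≤ δ := min_le_left _ _
  have hc1 : c ≤ 1 := min_le_right _ _
  by_cases hcase : ∀ n : ℕ, Int.fract (ystar + n * α) ≠ 1 - α
  · have hall : ∀ n : ℕ, Int.fract (ystar + n * α) ∈ sqJ d α pl pr z := by
      intro n
      induction n with
      | zero =>
        rw [show ystar + ((0:ℕ):ℝ) * α = ystar by push_cast; ring,
          Int.fract_eq_self.2 ⟨le_of_lt hy0, hy1⟩]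
        exact hyJ
      | succ k ih =>
        have step := (sqJ_rot h0 h1 z ih.1 ih.2.1 (hcase k)).1 ih
        rwa [fract_step, show ystar + (k:ℝ) * α + α = ystar + (((k:ℕ)+1:ℕ):ℝ) * α
          by push_cast; ring] at step
    obtain ⟨n, hn1, hn2⟩ := dense_fract hirr ystar (c/3) (c/3)
      (by linarith) (by linarith) (by linarith)
    exact hgap _ (by linarith) (by linarith) (hall n)
  · push_neg at hcase
    obtain ⟨N, hN⟩ := hcase
    have hnotα : ∀ k : ℕ, Int.fract (ystar - k * α) ≠ α := by
      intro k hk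
      obtain ⟨m1, hm1⟩ : ∃ m : ℤ, ystar - k * α - α = m := by
        apply Int.fract_eq_fract.1
        rw [hk, Int.fract_eq_self.2 ⟨le_of_lt h0, h1⟩]
      obtain ⟨m2, hm2⟩ : ∃ m : ℤ, ystar + N * α - (1 - α) = m := by
        apply Int.fract_eq_fract.1
        rw [hN, Int.fract_eq_self.2 ⟨by linarith, by linarith⟩]
      refine irr_solve hirr (q := N + k + 2) (by omega) (m2 - m1 + 1) ?_
      push_cast
      linarith [hm1, hm2]
    have hallb : ∀ k : ℕ, Int.fract (ystar - k * α) ∈ sqJ d α pl pr z := by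
      intro k
      induction k with
      | zero =>
        rw [show ystar - ((0:ℕ):ℝ) * α = ystar by push_cast; ring,
          Int.fract_eq_self.2 ⟨le_of_lt hy0, hy1⟩]
        exact hyJ
      | succ k ih =>
        have hv0 : 0 ≤ Int.fract (ystar - (((k:ℕ)+1:ℕ):ℝ) * α) := Int.fract_nonneg _
        have hv1 : Int.fract (ystar - (((k:ℕ)+1:ℕ):ℝ) * α) < 1 := Int.fract_lt_one _
        have hrotv : Int.fract (Int.fract (ystar - (((k:ℕ)+1:ℕ):ℝ) * α) + α)
            = Int.fract (ystar - k * α) := by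
          rw [fract_step]
          congr 1
          push_cast; ring
        have hvne0 : Int.fract (ystar - (((k:ℕ)+1:ℕ):ℝ) * α) ≠ 0 := by
          intro h'
          apply hnotα k
          rw [← hrotv, h', zero_add, Int.fract_eq_self.2 ⟨le_of_lt h0, h1⟩]
        have hvne : Int.fract (ystar - (((k:ℕ)+1:ℕ):ℝ) * α) ≠ 1 - α := by
          intro h'
          have hz : Int.fract (Int.fract (ystar - (((k:ℕ)+1:ℕ):ℝ) * α) + α) = 0 := by
            rw [h', show 1 - α + α = ((1:ℤ):ℝ) by push_cast; ring, Int.fract_intCast]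
          rw [hrotv] at hz
          have := ih.1
          linarith [hz ▸ this]
        exact (sqJ_rot h0 h1 z (lt_of_le_of_ne hv0 (Ne.symm hvne0)) hv1 hvne).2
          (by rw [hrotv]; exact ih)
    obtain ⟨n, hn1, hn2⟩ := dense_fract hirr.neg ystar (c/3) (c/3)
      (by linarith) (by linarith) (by linarith)
    rw [show ystar + (n:ℝ) * (-α) = ystar - n * α by ring] at hn1 hn2
    exact hgap _ (by linarith) (by linarith) (hallb n)

lemma sqS_const (hirr : Irrational α) (h0 : 0 < α) (h1 : α < 1) (z : sqX d) {y : ℝ}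
    (hy0 : 0 ≤ y) (hy1 : y < 1) : sqS d α pl pr z y = sqS d α pl pr z 0 := by
  have hJ := sqJ_empty (pl := pl) (pr := pr) hirr h0 h1 z
  set B : Set ℝ := {t | t ≤ 1 ∧ ∀ v, 0 ≤ v → v < t → sqS d α pl pr z v = sqS d α pl pr z 0}
    with hB
  have h0B : (0:ℝ) ∈ B := ⟨by norm_num, fun v hv1 hv2 => by linarith⟩
  have hBne : B.Nonempty := ⟨0, h0B⟩
  have hBbdd : BddAbove B := ⟨1, fun t ht => ht.1⟩
  have hu0 : 0 ≤ sSup B := le_csSup hBbdd h0B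
  have hu1 : sSup B ≤ 1 := csSup_le hBne (fun t ht => ht.1)
  have hub : ∀ v, 0 ≤ v → v < sSup B → sqS d α pl pr z v = sqS d α pl pr z 0 := by
    intro v hv1 hv2
    obtain ⟨t, htB, hvt⟩ := exists_lt_of_lt_csSup hBne hv2
    exact htB.2 v hv1 hvt
  have hueq : sSup B = 1 := by
    by_contra hune
    have hult : sSup B < 1 := lt_of_le_of_ne hu1 hune
    have hSu : sqS d α pl pr z (sSup B) = sqS d α pl pr z 0 := by
      rcases eq_or_lt_of_le hu0 with h' | h'
      · rw [← h']
      · by_contra hSne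
        have hmem : sSup B ∈ sqJ d α pl pr z := by
          refine ⟨h', hult, fun δ hδ => ?_⟩
          refine ⟨max (sSup B - δ/2) (sSup B/2), ?_, ?_, ?_⟩
          · calc sSup B - δ < sSup B - δ/2 := by linarith
            _ ≤ max (sSup B - δ/2) (sSup B/2) := le_max_left _ _
          · exact max_lt (by linarith) (by linarith)
          · rw [hub _ (le_trans (by linarith) (le_max_right _ _))
              (max_lt (by linarith) (by linarith))]
            exact fun he => hSne he.symm
        rw [hJ] at hmem
        exact hmem
    obtain ⟨δ, hδ, hconst⟩ := sqS_rlc hirr h0 h1 z hu0 hult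
    have hmemB : min (sSup B + δ) 1 ∈ B := by
      refine ⟨min_le_right _ _, fun v hv1 hv2 => ?_⟩
      rcases lt_or_ge v (sSup B) with h' | h'
      · exact hub v hv1 h'
      · rw [hconst v h' (by linarith [lt_of_lt_of_le hv2 (min_le_left _ _)])
          (lt_of_lt_of_le hv2 (min_le_right _ _))]
        exact hSu
    have hle := le_csSup hBbdd hmemB
    have hlt : sSup B < min (sSup B + δ) 1 := lt_min (by linarith) hult
    linarith
  exact hub y hy0 (by rw [hueq]; exact hy1)

lemma sqS_univ (hd : 1 ≤ d) (hirr : Irrational α) (h0 : 0 < α) (h1 : α < 1)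
    (htrans : ∀ s : Set (Fin d), (∀ i ∈ s, pl i ∈ s) → (∀ i ∈ s, pr i ∈ s) →
      s = ∅ ∨ s = Set.univ)
    (z : sqX d) {y : ℝ} (hy0 : 0 ≤ y) (hy1 : y < 1) :
    sqS d α pl pr z y = Set.univ := by
  have hL : pl '' sqS d α pl pr z 0 = sqS d α pl pr z 0 := by
    have h2 := sqS_eqL (pl := pl) (pr := pr) h0 h1 z (le_refl (0:ℝ)) (by linarith : (0:ℝ) < 1 - α)
    rw [show (0:ℝ) + α = α by ring,
      sqS_const hirr h0 h1 z (le_of_lt h0) h1] at h2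
    exact h2.symm
  have hR : pr '' sqS d α pl pr z 0 = sqS d α pl pr z 0 := by
    have h2 := sqS_eqR (pl := pl) (pr := pr) h0 h1 z (le_refl (1 - α)) (by linarith : 1 - α < 1)
    rw [show 1 - α + α - 1 = (0:ℝ) by ring,
      sqS_const hirr h0 h1 z (by linarith : (0:ℝ) ≤ 1 - α) (by linarith : 1 - α < 1)] at h2
    exact h2.symm
  rcases htrans (sqS d α pl pr z 0)
    (fun i hi => by rw [← hL]; exact ⟨i, hi, rfl⟩)
    (fun i hi => by rw [← hR]; exact ⟨i, hi, rfl⟩) with hemp | huniv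
  · exfalso
    obtain ⟨j, hj⟩ := sqS_nonempty hd hirr z (le_refl (0:ℝ)) one_pos
    rw [hemp] at hj
    exact hj
  · rw [sqS_const hirr h0 h1 z hy0 hy1]
    exact huniv

end SqJ

section Final

variable {d : ℕ} {α : ℝ} {pl pr : Equiv.Perm (Fin d)}

lemma nbhd_basis {U : Set (sqX d)} (hU : IsOpen U) {y : ℝ} (hy : y ∈ Set.Ico (0:ℝ) 1)
    {j : Fin d} (hyU : ((⟨y, hy⟩, j) : sqX d) ∈ U) :
    ∃ ε, 0 < ε ∧ ∀ u : ↥(Set.Ico (0:ℝ) 1), |(u:ℝ) - y| < ε → ((u, j) : sqX d) ∈ U := by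
  have hcont : Continuous (fun u : ↥(Set.Ico (0:ℝ) 1) => ((u, j) : sqX d)) :=
    continuous_id.prodMk continuous_const
  have hV : IsOpen {u : ↥(Set.Ico (0:ℝ) 1) | ((u, j) : sqX d) ∈ U} := hU.preimage hcont
  obtain ⟨W, hW, hVW⟩ := isOpen_induced_iff.1 hV
  have hyW : y ∈ W := by
    have : (⟨y, hy⟩ : ↥(Set.Ico (0:ℝ) 1)) ∈ Subtype.val ⁻¹' W := by rw [hVW]; exact hyU
    exact this
  obtain ⟨ε, hε, hball⟩ := Metric.isOpen_iff.1 hW y hyW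
  refine ⟨ε, hε, fun u hu => ?_⟩
  have h1 : (u : ℝ) ∈ W := hball (by rwa [Metric.mem_ball, Real.dist_eq])
  have h2 : u ∈ Subtype.val ⁻¹' W := h1
  rw [hVW] at h2
  exact h2

lemma perm_inv_mem {s : Set (Fin d)} (hs : ∀ i ∈ s, pl i ∈ s) : ∀ i ∈ s, pl⁻¹ i ∈ s := by
  have hpow : ∀ k : ℕ, ∀ i ∈ s, (pl ^ k) i ∈ s := by
    intro k
    induction k with
    | zero => intro i hi; simpa using hi
    | succ k ih =>
      intro i hi
      rw [pow_succ, Equiv.Perm.mul_apply]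
      exact ih (pl i) (hs i hi)
  intro i hi
  have hpos : 0 < orderOf pl := orderOf_pos pl
  have h1 : pl ((pl ^ (orderOf pl - 1)) i) = i := by
    rw [← Equiv.Perm.mul_apply, ← pow_succ', Nat.sub_add_cancel hpos,
      pow_orderOf_eq_one pl]
    rfl
  have h2 : pl⁻¹ i = (pl ^ (orderOf pl - 1)) i := by
    apply pl.injective
    rw [h1, ← Equiv.Perm.mul_apply, mul_inv_cancel, Equiv.Perm.one_apply]
  rw [h2]
  exact hpow _ i hi

lemma orb_level (h0 : 0 < α) (h1 : α < 1) {s : Set (Fin d)}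
    (hsl : ∀ i ∈ s, pl i ∈ s) (hsr : ∀ i ∈ s, pr i ∈ s)
    {z : sqX d} (hz : z.2 ∈ s) : ∀ w ∈ sqOrb d α pl pr z, w.2 ∈ s := by
  have hsl' := perm_inv_mem hsl
  have hsr' := perm_inv_mem hsr
  have hfwd : ∀ n : ℕ, (((sqTsub d α pl pr)^[n] z).2) ∈ s := by
    intro n
    induction n with
    | zero => simpa using hz
    | succ n ih =>
      rw [Function.iterate_succ_apply', sqT_snd]
      split_ifs
      · exact hsl _ ih
      · exact hsr _ ih
  have hbwd : ∀ n : ℕ, (((sqTinv d α pl pr)^[n] z).2) ∈ s := by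
    intro n
    induction n with
    | zero => simpa using hz
    | succ n ih =>
      rw [Function.iterate_succ_apply', sqTinv_snd]
      split_ifs
      · exact hsr' _ ih
      · exact hsl' _ ih
  rintro w ⟨n, h | h⟩
  · rw [← h]; exact hfwd n
  · have hli : Function.LeftInverse (sqTinv d α pl pr) (sqTsub d α pl pr) :=
      sqTinv_sqT h0 h1
    have := (hli.iterate n) w
    rw [h] at this
    rw [← this]
    exact hbwd n

end Final

/-- Proposition: a square-tiled interval exchange transformation with `α` irrational is
aperiodic, and it is minimal (every `T`-orbit `{T^n z : n ∈ ℤ}` is dense — since `T` is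
bijective, `w` lies in the `ℤ`-orbit of `z` iff `T^n z = w` or `T^n w = z` for some
`n ∈ ℕ`) if and only if no nonempty proper subset of `{1,…,d}` is invariant under both
`p_l` and `p_r`. -/
theorem aperiodic_and_minimal_iff_transitive
    (d : ℕ) (hd : 1 ≤ d) (α : ℝ) (hirr : Irrational α) (h0 : 0 < α) (h1 : α < 1)
    (pl pr : Equiv.Perm (Fin d)) :
    (∀ z : ↥(Set.Ico (0 : ℝ) 1) × Fin d, ∀ n : ℕ, 1 ≤ n →
        (sqTsub d α pl pr)^[n] z ≠ z) ∧
    ((∀ z : ↥(Set.Ico (0 : ℝ) 1) × Fin d,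
        Dense {w : ↥(Set.Ico (0 : ℝ) 1) × Fin d |
          ∃ n : ℕ, (sqTsub d α pl pr)^[n] z = w ∨ (sqTsub d α pl pr)^[n] w = z}) ↔
      (∀ s : Set (Fin d), (∀ i ∈ s, pl i ∈ s) → (∀ i ∈ s, pr i ∈ s) →
        s = ∅ ∨ s = Set.univ)) := by
  constructor
  · intro z n hn heq
    have hfst : (((sqTsub d α pl pr)^[n] z).1 : ℝ) = (z.1 : ℝ) := by rw [heq]
    rw [iter_fst] at hfst
    have hz1 : (z.1 : ℝ) ∈ Set.Ico (0:ℝ) 1 := z.1.2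
    obtain ⟨m, hm⟩ : ∃ m : ℤ, (z.1:ℝ) + n * α - (z.1:ℝ) = m :=
      Int.fract_eq_fract.1 (by rw [hfst, Int.fract_eq_self.2 hz1])
    exact irr_solve hirr (q := n) (by omega) m (by push_cast at hm ⊢; linarith)
  constructor
  · intro hmin s hsl hsr
    by_contra hc
    push_neg at hc
    obtain ⟨hne, hnuniv⟩ := hc
    obtain ⟨i0, hi0⟩ := hne
    obtain ⟨j0, hj0⟩ : ∃ j, j ∉ s := by
      by_contra hc2; push_neg at hc2; exact hnuniv (Set.eq_univ_of_forall hc2)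
    set z : sqX d := (⟨(0:ℝ), ⟨le_refl 0, one_pos⟩⟩, i0) with hzdef
    have hopen : IsOpen {w : sqX d | w.2 = j0} := by
      have he : {w : sqX d | w.2 = j0} = Prod.snd ⁻¹' {j0} := rfl
      rw [he]
      exact (isOpen_discrete _).preimage continuous_snd
    obtain ⟨w, hworb, hwU⟩ := (hmin z).exists_mem_open hopen
      ⟨(⟨(0:ℝ), ⟨le_refl 0, one_pos⟩⟩, j0), rfl⟩
    have hlev : w.2 ∈ s := orb_level h0 h1 hsl hsr hi0 w hworb
    rw [show w.2 = j0 from hwU] at hlev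
    exact hj0 hlev
  · intro htrans z
    rw [dense_iff_inter_open]
    intro U hUopen hUne
    obtain ⟨⟨⟨y, hy⟩, j⟩, hpU⟩ := hUne
    obtain ⟨ε, hε, hball⟩ := nbhd_basis hUopen hy hpU
    have hjS : j ∈ sqS d α pl pr z y := by
      rw [sqS_univ hd hirr h0 h1 htrans z hy.1 hy.2]
      trivial
    obtain ⟨w, hworb, hw2, hw3, hw4⟩ := hjS ε hε
    have hmem : ((w.1, j) : sqX d) ∈ U := by
      apply hball w.1
      rw [abs_lt]
      constructor <;> linarith
    have hweq : w = ((w.1, j) : sqX d) := by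
      rw [← hw2]
    exact ⟨w, by rw [hweq]; exact hmem, hworb⟩
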